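/- Consider a finite state space Fin N (N ≥ 1), a nonempty finite action set A s for each state s, nonnegative costs c : (s : Fin N) → A s → ℝ, an estimated substochastic transition function P̂ : (s : Fin N) → A s → Fin N → ℝ (P̂ s a s' ≥ 0 and ∑_{s'} P̂ s a s' ≤ 1), and radii ε : (s : Fin N) → A s → ℝ with ε s a ≥ 0. Define the operator Û^{†,0} by (Û^{†,0} x) s = min_{a ∈ A s} (c s a + max(∑_{s'} P̂ s a s' · x s' − ε s a · (max_{s''} x s''), 0)). Suppose Ĵ : Fin N → ℝ is nonnegative and satisfies, for every s, Ĵ s = min_{a ∈ A s} (c s a + inf {∑_{s'} P̃ s' · Ĵ s' | P̃ : Fin N → ℝ, P̃ ≥ 0, ∑_{s'} P̃ s' ≤ 1, ∑_{s'} |P̃ s' − P̂ s a s'| ≤ ε s a}). Then Û^{†,0} has a fixed point x with min_{a ∈ A s} c s a ≤ x s ≤ Ĵ s for every s. -/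

import Mathlib

open Filter Topology Set

lemma ciInf_le_ciInf_add {ι : Type*} [Fintype ι] [Nonempty ι] (f g : ι → ℝ) {δ : ℝ}
    (h : ∀ i, f i ≤ g i + δ) : (⨅ i, f i) ≤ (⨅ i, g i) + δ := by
  have h2 : (⨅ i, f i) - δ ≤ ⨅ i, g i :=
    le_ciInf fun i => by
      have := ciInf_le (Finite.bddBelow_range f) i
      linarith [h i]
  linarith

lemma abs_ciInf_sub_ciInf {ι : Type*} [Fintype ι] [Nonempty ι] (f g : ι → ℝ) {δ : ℝ}
    (h : ∀ i, |f i - g i| ≤ δ) : |(⨅ i, f i) - ⨅ i, g i| ≤ δ := by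
  rw [abs_le]
  constructor
  · have := ciInf_le_ciInf_add g f (fun i => by have := abs_le.1 (h i); linarith)
    linarith
  · have := ciInf_le_ciInf_add f g (fun i => by have := abs_le.1 (h i); linarith)
    linarith

lemma abs_ciSup_sub_ciSup {ι : Type*} [Fintype ι] [Nonempty ι] (f g : ι → ℝ) {δ : ℝ}
    (h : ∀ i, |f i - g i| ≤ δ) : |(⨆ i, f i) - ⨆ i, g i| ≤ δ := by
  have key : ∀ (u v : ι → ℝ), (∀ i, |u i - v i| ≤ δ) → (⨆ i, u i) ≤ (⨆ i, v i) + δ := by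
    intro u v huv
    refine ciSup_le fun i => ?_
    have h1 := le_ciSup (Finite.bddAbove_range v) i
    have h2 := abs_le.1 (huv i)
    linarith [h2.1, h2.2]
  rw [abs_le]
  constructor
  · have := key g f (fun i => by have h2 := abs_le.1 (h i); rw [abs_le]; constructor <;> linarith)
    linarith
  · have := key f g h
    linarith

lemma core_fixed {N : ℕ} (hN : 0 < N) (lo hi : Fin N → ℝ) (hlo : ∀ s, 0 ≤ lo s)
    (hlohi : lo ≤ hi)
    (F : (Fin N → ℝ) → ℝ → (Fin N → ℝ)) (L : NNReal)
    (hFx : ∀ t : ℝ, LipschitzWith 1 (fun x => F x t))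
    (hFt : ∀ x : Fin N → ℝ, LipschitzWith L (F x))
    (hkey : ∀ x : Fin N → ℝ, x ∈ Set.Icc lo hi → F x (⨆ s, x s) ∈ Set.Icc lo hi) :
    ∃ x, x ∈ Set.Icc lo hi ∧ x = F x (⨆ s, x s) := by
  haveI : Nonempty (Fin N) := Fin.pos_iff_nonempty.mp hN
  set σ : (Fin N → ℝ) → ℝ := fun x => ⨆ s, x s with hσdef
  have hσlip : ∀ x y : Fin N → ℝ, |σ x - σ y| ≤ dist x y := by
    intro x y
    exact abs_ciSup_sub_ciSup x y fun s => by
      rw [← Real.dist_eq]; exact dist_le_pi_dist x y s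
  have hσcont : Continuous σ := by
    refine (LipschitzWith.of_dist_le_mul (K := 1) (f := σ) fun x y => ?_).continuous
    rw [Real.dist_eq, NNReal.coe_one, one_mul]; exact hσlip x y
  set B : ℝ := ⨆ s, hi s with hBdef
  have hhiB : ∀ s, hi s ≤ B := fun s => le_ciSup (Finite.bddAbove_range hi) s
  have hB0 : 0 ≤ B :=
    le_trans (le_trans (hlo (Classical.arbitrary _)) (hlohi _)) (hhiB _)
  set proj : (Fin N → ℝ) → (Fin N → ℝ) := fun y s => max (lo s) (min (y s) (hi s)) with hprojdef
  have hproj_mem : ∀ y, proj y ∈ Set.Icc lo hi := by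
    intro y
    constructor
    · intro s; exact le_max_left _ _
    · intro s; exact max_le (hlohi s) (min_le_right _ _)
  have hproj_eq : ∀ y ∈ Set.Icc lo hi, proj y = y := by
    intro y hy
    funext s
    simp only [hprojdef]
    rw [min_eq_left (hy.2 s), max_eq_right (hy.1 s)]
  have hproj_lip : ∀ y z, dist (proj y) (proj z) ≤ dist y z := by
    intro y z
    rw [dist_pi_le_iff dist_nonneg]
    intro s
    rw [Real.dist_eq]
    calc |proj y s - proj z s|
        = |max (min (y s) (hi s)) (lo s) - max (min (z s) (hi s)) (lo s)| := by
          simp only [hprojdef]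
          rw [max_comm (lo s), max_comm (lo s)]
      _ ≤ |min (y s) (hi s) - min (z s) (hi s)| := abs_max_sub_max_le_abs _ _ _
      _ ≤ max |y s - z s| |hi s - hi s| := abs_min_sub_min_le_max _ _ _ _
      _ ≤ dist y z := by
          rw [sub_self, abs_zero]
          exact max_le (by rw [← Real.dist_eq]; exact dist_le_pi_dist y z s) dist_nonneg
  have hproj_cont : Continuous proj := by
    refine continuous_pi fun s => ?_
    exact continuous_const.max ((continuous_apply s).min continuous_const)
  have key : ∀ γ : NNReal, γ < 1 → ∃ pp : (Fin N → ℝ) × ℝ,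
      pp.1 ∈ Set.Icc lo hi ∧ pp.2 ∈ Set.Icc 0 B ∧ pp.2 = σ pp.1 ∧
      pp.1 = proj ((γ : ℝ) • F pp.1 pp.2) := by
    intro γ hγ1
    have hγlt : (γ : ℝ) < 1 := hγ1
    set Φ : ℝ → (Fin N → ℝ) → (Fin N → ℝ) := fun t x => proj ((γ : ℝ) • F x t) with hΦdef
    have hΦdist : ∀ t x y, dist (Φ t x) (Φ t y) ≤ γ * dist x y := by
      intro t x y
      calc dist (Φ t x) (Φ t y) ≤ dist ((γ:ℝ) • F x t) ((γ:ℝ) • F y t) := hproj_lip _ _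
        _ = γ * dist (F x t) (F y t) := by
            rw [dist_smul₀, Real.norm_eq_abs, abs_of_nonneg γ.coe_nonneg]
        _ ≤ γ * dist x y := by
            have h := (hFx t).dist_le_mul x y
            rw [NNReal.coe_one, one_mul] at h
            exact mul_le_mul_of_nonneg_left h γ.coe_nonneg
    have hΦcontr : ∀ t, ContractingWith γ (Φ t) :=
      fun t => ⟨hγ1, LipschitzWith.of_dist_le_mul (hΦdist t)⟩
    set xf : ℝ → (Fin N → ℝ) := fun t => ContractingWith.fixedPoint (Φ t) (hΦcontr t) with hxfdef
    have hxf_fix : ∀ t, Φ t (xf t) = xf t := fun t => (hΦcontr t).fixedPoint_isFixedPt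
    have hxf_mem : ∀ t, xf t ∈ Set.Icc lo hi := by
      intro t; rw [← hxf_fix t]; exact hproj_mem _
    have hΦt : ∀ x t t', dist (Φ t x) (Φ t' x) ≤ γ * L * |t - t'| := by
      intro x t t'
      calc dist (Φ t x) (Φ t' x) ≤ dist ((γ:ℝ) • F x t) ((γ:ℝ) • F x t') := hproj_lip _ _
        _ = γ * dist (F x t) (F x t') := by
            rw [dist_smul₀, Real.norm_eq_abs, abs_of_nonneg γ.coe_nonneg]
        _ ≤ γ * (L * |t - t'|) := by
            have h := (hFt x).dist_le_mul t t'
            rw [Real.dist_eq] at h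
            exact mul_le_mul_of_nonneg_left h γ.coe_nonneg
        _ = γ * L * |t - t'| := by ring
    have hxf_lip : ∀ t t', dist (xf t) (xf t') ≤ ((γ:ℝ) * L / (1 - γ)) * |t - t'| := by
      intro t t'
      have h1 : dist (xf t) (xf t') ≤ γ * dist (xf t) (xf t') + γ * L * |t - t'| := by
        calc dist (xf t) (xf t') = dist (Φ t (xf t)) (Φ t' (xf t')) := by
              rw [hxf_fix, hxf_fix]
          _ ≤ dist (Φ t (xf t)) (Φ t (xf t')) + dist (Φ t (xf t')) (Φ t' (xf t')) :=
              dist_triangle _ _ _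
          _ ≤ γ * dist (xf t) (xf t') + γ * L * |t - t'| :=
              add_le_add (hΦdist t _ _) (hΦt _ t t')
      have h2 : (0:ℝ) < 1 - γ := by linarith
      rw [div_mul_eq_mul_div, le_div_iff₀ h2]
      nlinarith [dist_nonneg (x := xf t) (y := xf t')]
    have hcoef : 0 ≤ (γ:ℝ) * L / (1 - γ) :=
      div_nonneg (mul_nonneg γ.coe_nonneg L.coe_nonneg) (by linarith)
    have hxf_cont : Continuous xf :=
      (LipschitzWith.of_dist_le_mul (K := Real.toNNReal ((γ:ℝ) * (L:ℝ) / (1 - (γ:ℝ))))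
        (f := xf) fun t t' => by
          rw [Real.coe_toNNReal _ hcoef, Real.dist_eq]
          exact hxf_lip t t').continuous
    set g : ℝ → ℝ := fun t => σ (xf t) - t with hgdef
    have hgcont : Continuous g := (hσcont.comp hxf_cont).sub continuous_id
    have hg0 : 0 ≤ g 0 := by
      have h1 : lo (Classical.arbitrary (Fin N)) ≤ xf 0 (Classical.arbitrary _) :=
        (hxf_mem 0).1 _
      have h2 : xf 0 (Classical.arbitrary (Fin N)) ≤ σ (xf 0) :=
        le_ciSup (Finite.bddAbove_range _) _
      have h3 := hlo (Classical.arbitrary (Fin N))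
      simp only [hgdef]
      linarith
    have hgB : g B ≤ 0 := by
      have h1 : σ (xf B) ≤ B := ciSup_le fun s => le_trans ((hxf_mem B).2 s) (hhiB s)
      simp only [hgdef]
      linarith
    obtain ⟨t0, ht0mem, ht0⟩ : ∃ t0 ∈ Set.Icc (0:ℝ) B, g t0 = 0 := by
      have hsub := intermediate_value_Icc' hB0 hgcont.continuousOn
      have h0 : (0:ℝ) ∈ Set.Icc (g B) (g 0) := ⟨hgB, hg0⟩
      obtain ⟨t0, ht0, hval⟩ := hsub h0
      exact ⟨t0, ht0, hval⟩
    refine ⟨(xf t0, t0), hxf_mem t0, ht0mem, ?_, ?_⟩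
    · simp only [hgdef] at ht0
      linarith
    · exact (hxf_fix t0).symm
  -- sequence of contraction factors tending to 1
  set γseq : ℕ → NNReal := fun n => Real.toNNReal (1 - 1/(n+1)) with hγseqdef
  have hγcoe : ∀ n : ℕ, ((γseq n : ℝ)) = 1 - 1/((n:ℝ)+1) := by
    intro n
    refine Real.coe_toNNReal _ ?_
    have h1 : 1/((n:ℝ)+1) ≤ 1 := by
      rw [div_le_one (by positivity)]
      linarith [Nat.cast_nonneg (α := ℝ) n]
    linarith
  have hγlt : ∀ n, γseq n < 1 := by
    intro n
    rw [← NNReal.coe_lt_one, hγcoe n]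
    have : 0 < 1/((n:ℝ)+1) := by positivity
    linarith
  have hγtend : Tendsto (fun n => ((γseq n : ℝ))) atTop (𝓝 1) := by
    have h1 : (fun n : ℕ => ((γseq n : ℝ))) = fun n : ℕ => 1 - 1/((n:ℝ)+1) := funext hγcoe
    rw [h1]
    have h2 := (tendsto_one_div_add_atTop_nhds_zero_nat).const_sub (1:ℝ)
    simpa using h2
  choose p hp1 hp2 hp3 hp4 using fun n => key (γseq n) (hγlt n)
  have hcomp : IsCompact ((Set.Icc lo hi) ×ˢ (Set.Icc (0:ℝ) B)) :=
    isCompact_Icc.prod isCompact_Icc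
  have hmem : ∀ n, p n ∈ (Set.Icc lo hi) ×ˢ (Set.Icc (0:ℝ) B) := fun n => ⟨hp1 n, hp2 n⟩
  obtain ⟨q, hq, φ, hφmono, hφtend⟩ := hcomp.tendsto_subseq hmem
  have hxt : Tendsto (fun n => (p (φ n)).1) atTop (𝓝 q.1) :=
    (continuous_fst.tendsto q).comp hφtend
  have htt : Tendsto (fun n => (p (φ n)).2) atTop (𝓝 q.2) :=
    (continuous_snd.tendsto q).comp hφtend
  have hFc : Continuous (fun r : (Fin N → ℝ) × ℝ => F r.1 r.2) := by
    have h := LipschitzWith.uncurry (f := F) (Kα := 1) (Kβ := L) (fun t => hFx t) (fun x => hFt x)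
    exact h.continuous
  have hGcont : Continuous (fun r : ((Fin N → ℝ) × ℝ) × ℝ => proj (r.2 • F r.1.1 r.1.2)) := by
    apply hproj_cont.comp
    exact continuous_snd.smul (hFc.comp continuous_fst)
  have hseq : Tendsto (fun n => ((p (φ n)), ((γseq (φ n) : ℝ)))) atTop (𝓝 (q, 1)) :=
    hφtend.prodMk_nhds (hγtend.comp hφmono.tendsto_atTop)
  have hlim2 : Tendsto (fun n => proj ((γseq (φ n) : ℝ) • F (p (φ n)).1 (p (φ n)).2)) atTop
      (𝓝 (proj ((1:ℝ) • F q.1 q.2))) := (hGcont.tendsto _).comp hseq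
  have heqseq : (fun n => (p (φ n)).1)
      = fun n => proj ((γseq (φ n):ℝ) • F (p (φ n)).1 (p (φ n)).2) :=
    funext fun n => hp4 (φ n)
  have hx0eq : q.1 = proj ((1:ℝ) • F q.1 q.2) := by
    refine tendsto_nhds_unique hxt ?_
    rw [heqseq]
    exact hlim2
  have ht0eq : q.2 = σ q.1 := by
    have h2 : Tendsto (fun n => σ ((p (φ n)).1)) atTop (𝓝 (σ q.1)) :=
      (hσcont.tendsto _).comp hxt
    have h3 : (fun n => (p (φ n)).2) = fun n => σ ((p (φ n)).1) := funext fun n => hp3 (φ n)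
    rw [h3] at htt
    exact tendsto_nhds_unique htt h2
  rw [one_smul] at hx0eq
  have hx0mem : q.1 ∈ Set.Icc lo hi := hq.1
  have hFmem := hkey q.1 hx0mem
  rw [ht0eq] at hx0eq
  refine ⟨q.1, hx0mem, ?_⟩
  exact hx0eq.trans (hproj_eq _ hFmem)

theorem stmt_10 (N : ℕ) (hN : 0 < N) (A : Fin N → Type)
    [∀ s, Fintype (A s)] [∀ s, Nonempty (A s)]
    (c : ∀ s, A s → ℝ) (hc : ∀ s a, 0 ≤ c s a)
    (Phat : ∀ s, A s → Fin N → ℝ)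
    (hP_nonneg : ∀ s a s', 0 ≤ Phat s a s')
    (hP_sub : ∀ s a, ∑ s', Phat s a s' ≤ 1)
    (ε : ∀ s, A s → ℝ) (hε : ∀ s a, 0 ≤ ε s a)
    (Jhat : Fin N → ℝ) (hJ_nonneg : ∀ s, 0 ≤ Jhat s)
    (hJhat : ∀ s, Jhat s = ⨅ a, (c s a +
      sInf {v : ℝ | ∃ Ptil : Fin N → ℝ, (∀ s', 0 ≤ Ptil s') ∧ (∑ s', Ptil s') ≤ 1 ∧
        (∑ s', |Ptil s' - Phat s a s'|) ≤ ε s a ∧ v = ∑ s', Ptil s' * Jhat s'})) :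
    ∃ x : Fin N → ℝ,
      (∀ s, x s = ⨅ a,
        (c s a + max ((∑ s', Phat s a s' * x s') - ε s a * (⨆ s'', x s'')) 0)) ∧
      (∀ s, (⨅ a, c s a) ≤ x s ∧ x s ≤ Jhat s) := by
  haveI : Nonempty (Fin N) := Fin.pos_iff_nonempty.mp hN
  set F : (Fin N → ℝ) → ℝ → (Fin N → ℝ) := fun x t s =>
    ⨅ a, (c s a + max ((∑ s', Phat s a s' * x s') - ε s a * t) 0) with hFdef
  set lo : Fin N → ℝ := fun s => ⨅ a, c s a with hlodef
  set L : NNReal := Finset.univ.sup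
    (fun s : Fin N => Finset.univ.sup (fun a : A s => Real.toNNReal (ε s a))) with hLdef
  have hεL : ∀ s a, ε s a ≤ (L : ℝ) := by
    intro s a
    have h2 : (Finset.univ.sup (fun a : A s => Real.toNNReal (ε s a))) ≤ L :=
      Finset.le_sup (f := fun s : Fin N =>
        Finset.univ.sup (fun a : A s => Real.toNNReal (ε s a))) (Finset.mem_univ s)
    have h1 : Real.toNNReal (ε s a) ≤ L :=
      le_trans (Finset.le_sup (f := fun a : A s => Real.toNNReal (ε s a)) (Finset.mem_univ a)) h2
    rw [← Real.coe_toNNReal (ε s a) (hε s a)]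
    exact_mod_cast h1
  have hlo : ∀ s, 0 ≤ lo s := fun s => le_ciInf (fun a => hc s a)
  -- the constraint sets are nonempty and have nonneg elements
  have hSne : ∀ s (a : A s), (∑ s', Phat s a s' * Jhat s') ∈
      {v : ℝ | ∃ Ptil : Fin N → ℝ, (∀ s', 0 ≤ Ptil s') ∧ (∑ s', Ptil s') ≤ 1 ∧
        (∑ s', |Ptil s' - Phat s a s'|) ≤ ε s a ∧ v = ∑ s', Ptil s' * Jhat s'} := by
    intro s a
    exact ⟨Phat s a, fun s' => hP_nonneg s a s', hP_sub s a, by simpa using hε s a, rfl⟩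
  have hSpos : ∀ s (a : A s), ∀ v ∈
      {v : ℝ | ∃ Ptil : Fin N → ℝ, (∀ s', 0 ≤ Ptil s') ∧ (∑ s', Ptil s') ≤ 1 ∧
        (∑ s', |Ptil s' - Phat s a s'|) ≤ ε s a ∧ v = ∑ s', Ptil s' * Jhat s'}, 0 ≤ v := by
    intro s a v hv
    obtain ⟨Ptil, hge, -, -, rfl⟩ := hv
    exact Finset.sum_nonneg fun s' _ => mul_nonneg (hge s') (hJ_nonneg s')
  have hJlo : lo ≤ Jhat := by
    intro s
    rw [hJhat s]
    refine ciInf_mono (Finite.bddBelow_range _) fun a => ?_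
    have h0 : (0:ℝ) ≤ sInf {v : ℝ | ∃ Ptil : Fin N → ℝ, (∀ s', 0 ≤ Ptil s') ∧
        (∑ s', Ptil s') ≤ 1 ∧ (∑ s', |Ptil s' - Phat s a s'|) ≤ ε s a ∧
        v = ∑ s', Ptil s' * Jhat s'} :=
      le_csInf ⟨_, hSne s a⟩ (hSpos s a)
    linarith
  have hFx : ∀ t : ℝ, LipschitzWith 1 (fun x => F x t) := by
    intro t
    refine LipschitzWith.of_dist_le_mul fun x y => ?_
    rw [NNReal.coe_one, one_mul, dist_pi_le_iff dist_nonneg]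
    intro s
    rw [Real.dist_eq]
    refine abs_ciInf_sub_ciInf _ _ fun a => ?_
    rw [add_sub_add_left_eq_sub]
    refine le_trans (abs_max_sub_max_le_abs _ _ _) ?_
    have heq : ((∑ s', Phat s a s' * x s') - ε s a * t) - ((∑ s', Phat s a s' * y s') - ε s a * t)
        = ∑ s', Phat s a s' * (x s' - y s') := by
      rw [sub_sub_sub_cancel_right, ← Finset.sum_sub_distrib]
      congr 1; funext s'; ring
    rw [heq]
    calc |∑ s', Phat s a s' * (x s' - y s')| ≤ ∑ s', |Phat s a s' * (x s' - y s')| :=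
          Finset.abs_sum_le_sum_abs _ _
      _ ≤ ∑ s', Phat s a s' * dist x y := by
          refine Finset.sum_le_sum fun s' _ => ?_
          rw [abs_mul, abs_of_nonneg (hP_nonneg s a s')]
          refine mul_le_mul_of_nonneg_left ?_ (hP_nonneg s a s')
          rw [← Real.dist_eq]
          exact dist_le_pi_dist x y s'
      _ = (∑ s', Phat s a s') * dist x y := (Finset.sum_mul _ _ _).symm
      _ ≤ 1 * dist x y := mul_le_mul_of_nonneg_right (hP_sub s a) dist_nonneg
      _ = dist x y := one_mul _
  have hFt : ∀ x : Fin N → ℝ, LipschitzWith L (F x) := by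
    intro x
    refine LipschitzWith.of_dist_le_mul fun t t' => ?_
    rw [dist_pi_le_iff (mul_nonneg L.coe_nonneg dist_nonneg)]
    intro s
    rw [Real.dist_eq, Real.dist_eq]
    refine abs_ciInf_sub_ciInf _ _ fun a => ?_
    rw [add_sub_add_left_eq_sub]
    refine le_trans (abs_max_sub_max_le_abs _ _ _) ?_
    have heq : ((∑ s', Phat s a s' * x s') - ε s a * t) - ((∑ s', Phat s a s' * x s') - ε s a * t')
        = ε s a * (t' - t) := by ring
    rw [heq, abs_mul, abs_of_nonneg (hε s a), abs_sub_comm]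
    exact mul_le_mul_of_nonneg_right (hεL s a) (abs_nonneg _)
  have hkey : ∀ x : Fin N → ℝ, x ∈ Set.Icc lo Jhat → F x (⨆ s, x s) ∈ Set.Icc lo Jhat := by
    intro x hx
    have hx0 : ∀ s', 0 ≤ x s' := fun s' => le_trans (hlo s') (hx.1 s')
    have hσ0 : (0:ℝ) ≤ ⨆ s, x s :=
      le_trans (hx0 (Classical.arbitrary _)) (le_ciSup (Finite.bddAbove_range x) _)
    constructor
    · intro s
      refine ciInf_mono (Finite.bddBelow_range _) fun a => ?_
      exact le_add_of_nonneg_right (le_max_right _ _)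
    · intro s
      rw [hJhat s]
      refine ciInf_mono (Finite.bddBelow_range _) fun a => ?_
      refine add_le_add le_rfl ?_
      refine le_csInf ⟨_, hSne s a⟩ ?_
      intro v hv
      obtain ⟨Ptil, hge, hsum, hl1, rfl⟩ := hv
      refine max_le ?_ (Finset.sum_nonneg fun s' _ => mul_nonneg (hge s') (hJ_nonneg s'))
      have step1 : (∑ s', Ptil s' * x s') ≤ ∑ s', Ptil s' * Jhat s' :=
        Finset.sum_le_sum fun s' _ => mul_le_mul_of_nonneg_left (hx.2 s') (hge s')
      have step2 : (∑ s', Phat s a s' * x s') - (∑ s', Ptil s' * x s')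
          ≤ ε s a * (⨆ s'', x s'') := by
        rw [← Finset.sum_sub_distrib]
        calc ∑ s', (Phat s a s' * x s' - Ptil s' * x s')
            ≤ ∑ s', |Ptil s' - Phat s a s'| * (⨆ s'', x s'') := by
              refine Finset.sum_le_sum fun s' _ => ?_
              have h1 : Phat s a s' - Ptil s' ≤ |Ptil s' - Phat s a s'| := by
                rw [abs_sub_comm]; exact le_abs_self _
              have h2 : x s' ≤ ⨆ s'', x s'' := le_ciSup (Finite.bddAbove_range x) s'
              have h3 : Phat s a s' * x s' - Ptil s' * x s' = (Phat s a s' - Ptil s') * x s' := by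
                ring
              rw [h3]
              calc (Phat s a s' - Ptil s') * x s' ≤ |Ptil s' - Phat s a s'| * x s' :=
                    mul_le_mul_of_nonneg_right h1 (hx0 s')
                _ ≤ |Ptil s' - Phat s a s'| * (⨆ s'', x s'') :=
                    mul_le_mul_of_nonneg_left h2 (abs_nonneg _)
          _ = (∑ s', |Ptil s' - Phat s a s'|) * (⨆ s'', x s'') := (Finset.sum_mul _ _ _).symm
          _ ≤ ε s a * (⨆ s'', x s'') := mul_le_mul_of_nonneg_right hl1 hσ0
      linarith
  obtain ⟨x, hmem, heq⟩ := core_fixed hN lo Jhat hlo hJlo F L hFx hFt hkey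
  refine ⟨x, ?_, ?_⟩
  · intro s
    exact congrFun heq s
  · intro s
    exact ⟨hmem.1 s, hmem.2 s⟩
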